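/- Suppose an estimator X̂ : ℝ^{N×M} → ℝ^{N×N} satisfies X̂(U·S·Vᵀ) = U·X̂(S)·Uᵀ for all orthogonal U ∈ O(N), V ∈ O(M), and all S ∈ ℝ^{N×M}. Then for every diagonal rectangular matrix D (i.e., D_{ij} = 0 for i ≠ j), the matrix X̂(D) is diagonal. -/

import Mathlib

open Matrix

/-- If an estimator `X̂ : ℝ^{N×M} → ℝ^{N×N}` satisfies
`X̂(U S Vᵀ) = U X̂(S) Uᵀ` for all orthogonal `U, V`, then `X̂(D)` is diagonal for
every diagonal rectangular matrix `D`. -/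
theorem equivariant_estimator_diagonal_X (N M : ℕ) (hNM : N ≤ M)
    (Xhat : Matrix (Fin N) (Fin M) ℝ → Matrix (Fin N) (Fin N) ℝ)
    (hEquiv : ∀ (U : Matrix (Fin N) (Fin N) ℝ) (V : Matrix (Fin M) (Fin M) ℝ)
        (S : Matrix (Fin N) (Fin M) ℝ),
        U * Uᵀ = 1 → Uᵀ * U = 1 → V * Vᵀ = 1 → Vᵀ * V = 1 →
        Xhat (U * S * Vᵀ) = U * Xhat S * Uᵀ) :
    ∀ D : Matrix (Fin N) (Fin M) ℝ,
      (∀ (i : Fin N) (j : Fin M), (i : ℕ) ≠ (j : ℕ) → D i j = 0) →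
      ∀ i j : Fin N, i ≠ j → Xhat D i j = 0 := by
  intro D hD i j hij
  set u : Fin N → ℝ := fun a => if a = i then (-1 : ℝ) else 1 with hu
  set k : Fin M := ⟨(i : ℕ), lt_of_lt_of_le i.isLt hNM⟩ with hk
  set v : Fin M → ℝ := fun b => if b = k then (-1 : ℝ) else 1 with hv
  set U : Matrix (Fin N) (Fin N) ℝ := Matrix.diagonal u with hU
  set V : Matrix (Fin M) (Fin M) ℝ := Matrix.diagonal v with hV
  have hsqu : ∀ a : Fin N, u a * u a = 1 := by
    intro a; by_cases h : a = i <;> simp [hu, h]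
  have hsqv : ∀ b : Fin M, v b * v b = 1 := by
    intro b; by_cases h : b = k <;> simp [hv, h]
  have hUU : U * Uᵀ = 1 := by
    simp [hU, Matrix.diagonal_transpose, Matrix.diagonal_mul_diagonal]
    ext a b
    simp [hsqu]
  have hUU' : Uᵀ * U = 1 := by
    rwa [hU, Matrix.diagonal_transpose] at hUU ⊢
  have hVV : V * Vᵀ = 1 := by
    simp [hV, Matrix.diagonal_transpose, Matrix.diagonal_mul_diagonal]
    ext a b
    simp [hsqv]
  have hVV' : Vᵀ * V = 1 := by
    rwa [hV, Matrix.diagonal_transpose] at hVV ⊢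
  have hfix : U * D * Vᵀ = D := by
    ext a b
    rw [hV, Matrix.diagonal_transpose, hU]
    rw [Matrix.mul_diagonal, Matrix.diagonal_mul]
    by_cases hab : (a : ℕ) = (b : ℕ)
    · have hai : a = i ↔ b = k := by
        constructor
        · intro h; apply Fin.ext; simp [hk, ← hab, h]
        · intro h; apply Fin.ext
          have : (b : ℕ) = (i : ℕ) := by rw [h]
          omega
      by_cases h : a = i
      · simp [hu, hv, h, hai.mp h]
      · have hb : b ≠ k := fun hh => h (hai.mpr hh)
        simp [hu, hv, h, hb]
    · rw [hD a b hab]; ring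
  have heq := hEquiv U V D hUU hUU' hVV hVV'
  rw [hfix] at heq
  have hij' : Xhat D i j = u i * Xhat D i j * u j := by
    conv_lhs => rw [heq]
    rw [hU, Matrix.diagonal_transpose, Matrix.mul_diagonal, Matrix.diagonal_mul]
  have hui : u i = -1 := by simp [hu]
  have huj : u j = 1 := by simp [hu, (Ne.symm hij)]
  rw [hui, huj] at hij'
  linarith
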